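/- Let K be a field with char K = 2, let a ∈ K with a ≠ 0, and let λ ∈ K with λ ≠ 0, λ ≠ 1 and λ not a primitive third root of unity (equivalently (3)!_λ ≠ 0). Let V = K·x be a one-dimensional K-vector space, let c := id_{V⊗V}, and let b : V ⊗ V → V be the linear map with b(x ⊗ x) = a·x. Then: (i) c satisfies the braid equation and is of Hecke type of mark λ; (ii) b is a c-bracket on (V, c); (iii) the canonical map ι_{c,b} : V → U(V, c, b) is injective; and (iv) b ≠ 0. (Hence the hypothesis char K ≠ 2 cannot be removed from the theorem asserting that injectivity of ι_{c,b} forces b = 0 when λ ≠ 1.) -/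

import Mathlib

open TensorProduct

noncomputable section

variable {K : Type*} [Field K] {V : Type*} [AddCommGroup V] [Module K V]

/-- The endomorphism `c ⊗ id_V` of `V ⊗ (V ⊗ V)` (transported along associativity). -/
def opC1 (c : V ⊗[K] V →ₗ[K] V ⊗[K] V) :
    V ⊗[K] (V ⊗[K] V) →ₗ[K] V ⊗[K] (V ⊗[K] V) :=
  (TensorProduct.assoc K V V V).toLinearMap ∘ₗ
    LinearMap.rTensor V c ∘ₗ (TensorProduct.assoc K V V V).symm.toLinearMap

/-- The endomorphism `id_V ⊗ c` of `V ⊗ (V ⊗ V)`. -/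
def opC2 (c : V ⊗[K] V →ₗ[K] V ⊗[K] V) :
    V ⊗[K] (V ⊗[K] V) →ₗ[K] V ⊗[K] (V ⊗[K] V) :=
  LinearMap.lTensor V c

/-- The map `b ⊗ id_V : V ⊗ (V ⊗ V) → V ⊗ V`. -/
def opB1 (b : V ⊗[K] V →ₗ[K] V) :
    V ⊗[K] (V ⊗[K] V) →ₗ[K] V ⊗[K] V :=
  LinearMap.rTensor V b ∘ₗ (TensorProduct.assoc K V V V).symm.toLinearMap

/-- The map `id_V ⊗ b : V ⊗ (V ⊗ V) → V ⊗ V`. -/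
def opB2 (b : V ⊗[K] V →ₗ[K] V) :
    V ⊗[K] (V ⊗[K] V) →ₗ[K] V ⊗[K] V :=
  LinearMap.lTensor V b

/-- The braid equation `c₁ ∘ c₂ ∘ c₁ = c₂ ∘ c₁ ∘ c₂`. -/
def BraidEq (c : V ⊗[K] V →ₗ[K] V ⊗[K] V) : Prop :=
  opC1 c ∘ₗ opC2 c ∘ₗ opC1 c = opC2 c ∘ₗ opC1 c ∘ₗ opC2 c

/-- `c` is of Hecke type of mark `lam`: `(c + id) ∘ (c - lam • id) = 0`. -/
def IsHecke (lam : K) (c : V ⊗[K] V →ₗ[K] V ⊗[K] V) : Prop :=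
  (c + LinearMap.id) ∘ₗ (c - lam • LinearMap.id) = 0

/-- `b` is a `c`-bracket: `c ∘ b₁ = b₂ ∘ c₁ ∘ c₂` and `c ∘ b₂ = b₁ ∘ c₂ ∘ c₁`. -/
def IsBracket (c : V ⊗[K] V →ₗ[K] V ⊗[K] V) (b : V ⊗[K] V →ₗ[K] V) : Prop :=
  c ∘ₗ opB1 b = opB2 b ∘ₗ opC1 c ∘ₗ opC2 c ∧
  c ∘ₗ opB2 b = opB1 b ∘ₗ opC2 c ∘ₗ opC1 c

/-- The linear map `V ⊗ V → T(V)`, `v ⊗ w ↦ ι v * ι w`. -/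
def tensMul : V ⊗[K] V →ₗ[K] TensorAlgebra K V :=
  LinearMap.mul' K (TensorAlgebra K V) ∘ₗ
    TensorProduct.map (TensorAlgebra.ι K) (TensorAlgebra.ι K)

/-- The relation on `T(V)` whose associated ring quotient is
`U(V,c,b) = T(V)/(c(z) - lam•z - b(z) : z ∈ V ⊗ V)`. -/
def envRel (lam : K) (c : V ⊗[K] V →ₗ[K] V ⊗[K] V) (b : V ⊗[K] V →ₗ[K] V) :
    TensorAlgebra K V → TensorAlgebra K V → Prop :=
  fun x y => ∃ z : V ⊗[K] V,
    x = tensMul (c z) ∧ y = lam • tensMul z + TensorAlgebra.ι K (b z)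

/-- The canonical map `ι_{c,b} : V → U(V,c,b)`. -/
def envIota (lam : K) (c : V ⊗[K] V →ₗ[K] V ⊗[K] V) (b : V ⊗[K] V →ₗ[K] V) :
    V →ₗ[K] RingQuot (envRel lam c b) :=
  (RingQuot.mkAlgHom K (envRel lam c b)).toLinearMap ∘ₗ TensorAlgebra.ι K

/-- The q-integer `(n)_lam = 1 + lam + ⋯ + lam^(n-1)`. -/
def qInt (lam : K) (n : ℕ) : K := ∑ i ∈ Finset.range n, lam ^ i

/-- The q-factorial `(n)!_lam = (1)_lam (2)_lam ⋯ (n)_lam`. -/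
def qFac (lam : K) (n : ℕ) : K := ∏ i ∈ Finset.range n, qInt lam (i + 1)


/-- **Example (Masuoka).**  In characteristic `2`, for `V = K·x` one-dimensional,
`c = id` and `b(x ⊗ x) = a·x` with `a ≠ 0`, for any `lam ∉ {0,1}` with `(3)!_lam ≠ 0`:
`c` satisfies the braid equation and is of Hecke type of mark `lam`, `b` is a `c`-bracket,
`ι_{c,b} : V → U(V,c,b)` is injective, and yet `b ≠ 0`.  Hence `char K ≠ 2` cannot be
dropped from the triviality theorem for brackets. -/
theorem masuoka_counterexample_char_two
    (hchar : ringChar K = 2)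
    (a : K) (ha : a ≠ 0)
    (lam : K) (hlam0 : lam ≠ 0) (hlam1 : lam ≠ 1) (hfac : qFac lam 3 ≠ 0)
    (x : V) (hx : x ≠ 0) (hspan : ∀ v : V, ∃ k : K, v = k • x)
    (b : V ⊗[K] V →ₗ[K] V) (hbx : b (x ⊗ₜ[K] x) = a • x) :
    BraidEq (LinearMap.id : V ⊗[K] V →ₗ[K] V ⊗[K] V) ∧
    IsHecke lam (LinearMap.id : V ⊗[K] V →ₗ[K] V ⊗[K] V) ∧
    IsBracket (LinearMap.id : V ⊗[K] V →ₗ[K] V ⊗[K] V) b ∧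
    Function.Injective (envIota lam (LinearMap.id : V ⊗[K] V →ₗ[K] V ⊗[K] V) b) ∧
    b ≠ 0 := by
  haveI : CharP K 2 := hchar ▸ ringChar.charP K
  have h2 : (2 : K) = 0 := CharP.cast_eq_zero K 2
  have hlam1' : (1 : K) - lam ≠ 0 := sub_ne_zero.mpr (Ne.symm hlam1)
  set t : K := a / (1 - lam) with ht
  have htne : t ≠ 0 := div_ne_zero ha hlam1'
  -- basic facts about the span
  have hxsmul : ∀ k : K, k • x = 0 → k = 0 := by
    intro k hk
    rcases smul_eq_zero.1 hk with h | h
    · exact h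
    · exact absurd h hx
  classical
  let coeff : V → K := fun v => (hspan v).choose
  have hcoeff : ∀ v : V, v = coeff v • x := fun v => (hspan v).choose_spec
  have hcu : ∀ (v : V) (k : K), v = k • x → coeff v = k := by
    intro v k hk
    have h0 : (coeff v - k) • x = 0 := by
      rw [sub_smul, ← hcoeff v, hk, sub_self]
    exact sub_eq_zero.mp (hxsmul _ h0)
  let f : V →ₗ[K] K :=
    { toFun := fun v => t * coeff v
      map_add' := by
        intro v w
        have : coeff (v + w) = coeff v + coeff w := by
          apply hcu
          rw [add_smul, ← hcoeff, ← hcoeff]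
        simp only [this]; ring
      map_smul' := by
        intro k v
        have : coeff (k • v) = k * coeff v := by
          apply hcu
          rw [mul_smul, ← hcoeff]
        simp only [this, RingHom.id_apply, smul_eq_mul]; ring }
  have hfx : f x = t := by
    have : coeff x = 1 := hcu x 1 (one_smul K x).symm
    simp [f, this]
  have hc1 : opC1 (LinearMap.id : V ⊗[K] V →ₗ[K] V ⊗[K] V) = LinearMap.id := by
    unfold opC1
    rw [LinearMap.rTensor_id, LinearMap.id_comp]
    ext z
    simp
  have hc2 : opC2 (LinearMap.id : V ⊗[K] V →ₗ[K] V ⊗[K] V) = LinearMap.id := by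
    unfold opC2
    exact LinearMap.lTensor_id V (V ⊗[K] V)
  refine ⟨?_, ?_, ?_, ?_, ?_⟩
  · -- BraidEq
    unfold BraidEq
    rw [hc1, hc2]
  · -- IsHecke
    unfold IsHecke
    refine LinearMap.ext fun z => ?_
    simp only [LinearMap.comp_apply, LinearMap.add_apply, LinearMap.sub_apply,
      LinearMap.smul_apply, LinearMap.id_apply, LinearMap.zero_apply]
    have : (2 : K) • (z - lam • z) = 0 := by rw [h2, zero_smul]
    calc (z - lam • z) + (z - lam • z) = (2 : K) • (z - lam • z) := (two_smul K _).symm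
      _ = 0 := this
  · -- IsBracket
    have hkey : opB1 b = (opB2 b : V ⊗[K] (V ⊗[K] V) →ₗ[K] V ⊗[K] V) := by
      apply TensorProduct.ext'
      intro v p
      induction p using TensorProduct.induction_on with
      | zero => simp [opB1, opB2]
      | tmul w u =>
        obtain ⟨k, rfl⟩ := hspan v
        obtain ⟨l, rfl⟩ := hspan w
        obtain ⟨m, rfl⟩ := hspan u
        simp only [opB1, opB2, LinearMap.comp_apply, LinearEquiv.coe_coe,
          TensorProduct.assoc_symm_tmul, LinearMap.rTensor_tmul, LinearMap.lTensor_tmul,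
          ← TensorProduct.smul_tmul', TensorProduct.tmul_smul, map_smul, hbx, smul_smul]
        try (congr 1; ring)
      | add p q hp hq =>
        simp only [TensorProduct.tmul_add, map_add, hp, hq]
    constructor
    · rw [hc1, hc2, hkey]
      simp
    · rw [hc1, hc2, hkey]
      simp
  · -- Injectivity
    set F : TensorAlgebra K V →ₐ[K] K := TensorAlgebra.lift K f with hF
    have hFι : ∀ v : V, F (TensorAlgebra.ι K v) = f v := by
      intro v; simp [hF]
    have hFm : ∀ z : V ⊗[K] V, F (tensMul z) = lam * F (tensMul z) + f (b z) := by
      have hkey : (F.toLinearMap ∘ₗ tensMul : V ⊗[K] V →ₗ[K] K)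
          = lam • (F.toLinearMap ∘ₗ tensMul) + f ∘ₗ b := by
        apply TensorProduct.ext'
        intro v w
        obtain ⟨k, rfl⟩ := hspan v
        obtain ⟨l, rfl⟩ := hspan w
        have hteq : t * t = lam * (t * t) + a * t := by
          have h1 : (1 - lam) * (t * t) = a * t := by
            rw [ht]; field_simp
          linear_combination h1
        simp only [LinearMap.add_apply, LinearMap.smul_apply, LinearMap.comp_apply,
          AlgHom.toLinearMap_apply, tensMul, ← TensorProduct.smul_tmul',
          TensorProduct.tmul_smul, map_smul, hbx, smul_smul, smul_eq_mul,
          TensorProduct.map_tmul, LinearMap.mul'_apply, map_mul, hFι, hfx]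
        linear_combination (k * l) * hteq
      intro z
      have := LinearMap.congr_fun hkey z
      simpa using this
    have hrel : ∀ p q, envRel lam (LinearMap.id : V ⊗[K] V →ₗ[K] V ⊗[K] V) b p q →
        F p = F q := by
      rintro p q ⟨z, rfl, rfl⟩
      simp only [LinearMap.id_apply, map_add, map_smul, hFι, smul_eq_mul]
      exact hFm z
    set φ : RingQuot (envRel lam (LinearMap.id : V ⊗[K] V →ₗ[K] V ⊗[K] V) b) →ₐ[K] K :=
      RingQuot.liftAlgHom K ⟨F, hrel⟩ with hφ
    have hφι : ∀ v : V,
        φ (envIota lam (LinearMap.id : V ⊗[K] V →ₗ[K] V ⊗[K] V) b v) = f v := by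
      intro v
      simp only [envIota, LinearMap.comp_apply, AlgHom.toLinearMap_apply, hφ]
      rw [RingQuot.liftAlgHom_mkAlgHom_apply]
      exact hFι v
    have hker : ∀ v : V,
        envIota lam (LinearMap.id : V ⊗[K] V →ₗ[K] V ⊗[K] V) b v = 0 → v = 0 := by
      intro v hv
      have h0 : f v = 0 := by rw [← hφι v, hv, map_zero]
      obtain ⟨k, rfl⟩ := hspan v
      have : k * f x = 0 := by
        rw [← smul_eq_mul, ← map_smul, h0]
      rw [hfx] at this
      rcases mul_eq_zero.1 this with h | h
      · rw [h, zero_smul]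
      · exact absurd h htne
    intro u v huv
    have : envIota lam (LinearMap.id : V ⊗[K] V →ₗ[K] V ⊗[K] V) b (u - v) = 0 := by
      rw [map_sub, huv, sub_self]
    exact sub_eq_zero.mp (hker _ this)
  · -- b ≠ 0
    intro hb
    have : b (x ⊗ₜ[K] x) = 0 := by rw [hb]; rfl
    rw [hbx] at this
    exact ha (hxsmul a this)

end
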